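/- arXiv:1809.09322 — 2 statements merged into one kernel-verified Lean document; each statement's English description precedes it below -/
import Mathlib

section
/- Assume the structural map P → (iAi)^×, u ↦ ui, is injective. Then the map Θ : N_G(P_γ) → N_{hU(iAi)}(Pi)/C_{(iBi)^×}(Pi), defined by Θ(g) := class of i a₁⁻¹ g, where a₁ ∈ (B^P)^× is any element with {}^g i = {}^{a₁} i (such a₁ exists since g fixes γ, and here g denotes the image of g under the structural map G → A^×), is a well-defined group homomorphism with kernel C_H(P). -/
universe u

/-- The set of `Ḡ`-automorphisms of `P`. -/
def autBarSet (G : Type u) [Group G] (H : Subgroup G) [H.Normal] (P : Subgroup G) :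
    Set (MulAut ↥P × (G ⧸ H)) :=
  {x | ∃ g : G, (g : G ⧸ H) = x.2 ∧
      ∀ u : ↥P, ((x.1 u : G) : G ⧸ H) = ((g * u * g⁻¹ : G) : G ⧸ H)}

/-- The set of interior `Ḡ`-automorphisms of `P`. -/
def intBarSet (G : Type u) [Group G] (H : Subgroup G) [H.Normal] (P : Subgroup G) :
    Set (MulAut ↥P × (G ⧸ H)) :=
  {x ∈ autBarSet G H P | ∃ v : ↥P, x.1 = MulAut.conj v}

section

variable {𝒪 : Type u} [CommRing 𝒪] {G : Type u} [Group G] {H : Subgroup G} [H.Normal]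
  {A : Type u} [Ring A] [Algebra 𝒪 A]

/-- `B^P`: the `P`-fixed points (under conjugation via `ρ`) of the identity component
`B = 𝒜 1` of `A`. -/
def fixedPart (𝒜 : G ⧸ H → Submodule 𝒪 A) (ρ : G →* Aˣ) (P : Subgroup G) : Set A :=
  {a | a ∈ 𝒜 (1 : G ⧸ H) ∧ ∀ u ∈ P, (ρ u : A) * a = a * (ρ u : A)}

/-- `i` is a primitive idempotent of (the subalgebra with underlying set) `S ⊆ A`. -/
def IsPrimitiveIdempotentIn (S : Set A) (i : A) : Prop :=
  i ∈ S ∧ i * i = i ∧ i ≠ 0 ∧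
    ∀ j ∈ S, j * j = j → i * j = j → j * i = j → j = 0 ∨ j = i

/-- `γ` is a point on (the subalgebra with underlying set) `S ⊆ A`: the conjugacy class
under the units of `S` of a primitive idempotent of `S`. -/
def IsPointOn (S : Set A) (γ : Set A) : Prop :=
  ∃ i, IsPrimitiveIdempotentIn S i ∧
    γ = {a | ∃ u v : A, u ∈ S ∧ v ∈ S ∧ u * v = 1 ∧ v * u = 1 ∧ a = u * i * v}

/-- `f` realizes an isomorphism `Ai ≅ (Ai)(ḡ⁻¹)_φ` of `Ḡ`-graded `(A, 𝒪P)`-bimodules,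
where `Ai = {x : A | x·i = x}`: `f` is `𝒪`-linear, maps `Ai` bijectively onto `Ai`,
is left `A`-linear on `Ai`, shifts the grading by `ḡ⁻¹` and intertwines the right
`P`-action with its `φ`-twist. -/
def IsFusionMap (𝒜 : G ⧸ H → Submodule 𝒪 A) (ρ : G →* Aˣ) (P : Subgroup G) (i : A)
    (φ : MulAut ↥P) (gb : G ⧸ H) (f : A →ₗ[𝒪] A) : Prop :=
  (∀ x : A, x * i = x → f x * i = f x) ∧
  (∀ a x : A, x * i = x → f (a * x) = a * f x) ∧
  (∀ (xb : G ⧸ H) (x : A), x ∈ 𝒜 xb → x * i = x → f x ∈ 𝒜 (xb * gb⁻¹)) ∧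
  (∀ u : ↥P, ∀ x : A, x * i = x → f (x * (ρ (u : G) : A)) = f x * (ρ ((φ u : ↥P) : G) : A)) ∧
  (∀ x y : A, x * i = x → y * i = y → f x = f y → x = y) ∧
  (∀ y : A, y * i = y → ∃ x, x * i = x ∧ f x = y)

/-- The set of `(A, Ḡ)`-fusions of `P_γ` (for `i ∈ γ`): pairs `(φ, ḡ) ∈ Aut^Ḡ(P)` with
`Ai ≅ (Ai)(ḡ⁻¹)_φ` as `Ḡ`-graded `(A, 𝒪P)`-bimodules. -/
def fusionSetC (𝒜 : G ⧸ H → Submodule 𝒪 A) (ρ : G →* Aˣ) (P : Subgroup G) (i : A) :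
    Set (MulAut ↥P × (G ⧸ H)) :=
  {x ∈ autBarSet G H P | ∃ f : A →ₗ[𝒪] A, IsFusionMap 𝒜 ρ P i x.1 x.2 f}

/-- The set of homogeneous units of the corner algebra `iAi` (whose identity is `i`). -/
def hUCornerSet (𝒜 : G ⧸ H → Submodule 𝒪 A) (i : A) : Set A :=
  {a | i * a * i = a ∧ (∃ gb : G ⧸ H, a ∈ 𝒜 gb) ∧
    ∃ a', i * a' * i = a' ∧ a * a' = i ∧ a' * a = i}

/-- The normalizer `N_{hU(iAi)}(Pi)` of `Pi = {ui : u ∈ P}` in the group of homogeneous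
units of `iAi`. -/
def normalizerPiSet (𝒜 : G ⧸ H → Submodule 𝒪 A) (ρ : G →* Aˣ) (P : Subgroup G)
    (i : A) : Set A :=
  {a ∈ hUCornerSet 𝒜 i | ∀ a' : A, i * a' * i = a' → a * a' = i → a' * a = i →
      ∀ u ∈ P, ∃ v ∈ P, a * ((ρ u : A) * i) * a' = (ρ v : A) * i}

/-- The centralizer `C_{(iBi)ˣ}(Pi)` of `Pi` in the unit group of `iBi`
(`B = 𝒜 1` being the identity component of `A`). -/
def centralizerPiSet (𝒜 : G ⧸ H → Submodule 𝒪 A) (ρ : G →* Aˣ) (P : Subgroup G)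
    (i : A) : Set A :=
  {a | i * a * i = a ∧ a ∈ 𝒜 (1 : G ⧸ H) ∧
    (∃ a', i * a' * i = a' ∧ a' ∈ 𝒜 (1 : G ⧸ H) ∧ a * a' = i ∧ a' * a = i) ∧
    ∀ u ∈ P, a * ((ρ u : A) * i) = ((ρ u : A) * i) * a}

end

section

variable {𝒪 : Type u} [CommRing 𝒪] {G : Type u} [Group G] {H : Subgroup G} [H.Normal]
  {A : Type u} [Ring A] [Algebra 𝒪 A]

/-- `N_G(P_γ) = {g ∈ N_G(P) : {}^g γ = γ}`, conjugation taken through `ρ`. -/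
def stabNGammaSet (ρ : G →* Aˣ) (P : Subgroup G) (γ : Set A) : Set G :=
  {g | g ∈ Subgroup.normalizer (P : Set G) ∧ ∀ a : A, a ∈ γ ↔ (ρ g : A) * a * (ρ g⁻¹ : A) ∈ γ}

/-- `(a₁, b₁)` is a pair of mutually inverse units of `B^P` with `{}^g i = {}^{a₁} i`. -/
def IsConjChoice (𝒜 : G ⧸ H → Submodule 𝒪 A) (ρ : G →* Aˣ) (P : Subgroup G)
    (i : A) (g : G) (a₁ b₁ : A) : Prop :=
  a₁ ∈ fixedPart 𝒜 ρ P ∧ b₁ ∈ fixedPart 𝒜 ρ P ∧ a₁ * b₁ = 1 ∧ b₁ * a₁ = 1 ∧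
    (ρ g : A) * i * (ρ g⁻¹ : A) = a₁ * i * b₁

end


section ThetaAuxHelpers

variable {𝒪 : Type u} [CommRing 𝒪] {G : Type u} [Group G] {H : Subgroup G} [H.Normal]
  {A : Type u} [Ring A] [Algebra 𝒪 A]

theorem theta_mul_one_ctx {a b : A} (h : a * b = 1) (x : A) : a * (b * x) = x := by
  rw [← mul_assoc, h, one_mul]

theorem theta_idem_ctx {a : A} (h : a * a = a) (x : A) : a * (a * x) = a * x := by
  rw [← mul_assoc, h]

theorem theta_comm_ctx {a b : A} (h : a * b = b * a) (x : A) : a * (b * x) = b * (a * x) := by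
  rw [← mul_assoc, h, mul_assoc]

theorem theta_unit_mul_inv (ρ : G →* Aˣ) (g : G) : (ρ g : A) * (ρ g⁻¹ : A) = 1 := by
  rw [← Units.val_mul, ← map_mul, mul_inv_cancel, map_one, Units.val_one]

theorem theta_unit_inv_mul (ρ : G →* Aˣ) (g : G) : (ρ g⁻¹ : A) * (ρ g : A) = 1 := by
  rw [← Units.val_mul, ← map_mul, inv_mul_cancel, map_one, Units.val_one]

theorem theta_unit_swap (ρ : G →* Aˣ) (g u : G) (x : A) :
    (ρ g : A) * ((ρ u : A) * x) = (ρ (g * u * g⁻¹) : A) * ((ρ g : A) * x) := by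
  rw [← mul_assoc, ← mul_assoc, ← Units.val_mul, ← Units.val_mul, ← map_mul, ← map_mul]
  have h : g * u = g * u * g⁻¹ * g := by group
  rw [← h]

theorem theta_fixedPart_mul {𝒜 : G ⧸ H → Submodule 𝒪 A} {ρ : G →* Aˣ} {P : Subgroup G}
    (hgmul : ∀ {x y : G ⧸ H} {a b : A}, a ∈ 𝒜 x → b ∈ 𝒜 y → a * b ∈ 𝒜 (x * y))
    {a b : A} (ha : a ∈ fixedPart 𝒜 ρ P) (hb : b ∈ fixedPart 𝒜 ρ P) :
    a * b ∈ fixedPart 𝒜 ρ P := by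
  refine ⟨?_, fun u hu => ?_⟩
  · simpa using hgmul ha.1 hb.1
  · rw [← mul_assoc, ha.2 u hu, mul_assoc, hb.2 u hu, ← mul_assoc]

end ThetaAuxHelpers

/-!
STATEMENT 6: assume the structural map `P → (iAi)ˣ`, `u ↦ ui`, is injective.  Then
`Θ : N_G(P_γ) → N_{hU(iAi)}(Pi)/C_{(iBi)ˣ}(Pi)`, `Θ(g) :=` the class of `i·a₁⁻¹·g`
(where `a₁ ∈ (B^P)ˣ` is any element with `{}^g i = {}^{a₁} i`, which exists since `g`
fixes `γ`), is a well-defined group homomorphism with kernel `C_H(P)`.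
-/
theorem theta_well_defined_hom_kernel {𝒪 : Type u} [CommRing 𝒪] {G : Type u} [Group G]
    [Finite G] {H : Subgroup G} [H.Normal] {A : Type u} [Ring A] [Algebra 𝒪 A]
    (𝒜 : G ⧸ H → Submodule 𝒪 A) (ρ : G →* Aˣ) (P : Subgroup G)
    -- `𝒜`, `ρ` make `A` a `Ḡ`-graded `G`-interior algebra:
    (hone : (1 : A) ∈ 𝒜 1)
    (hgmul : ∀ {x y : G ⧸ H} {a b : A}, a ∈ 𝒜 x → b ∈ 𝒜 y → a * b ∈ 𝒜 (x * y))
    (hsup : (⨆ x, 𝒜 x) = ⊤) (hind : iSupIndep 𝒜)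
    (hρ : ∀ g : G, (ρ g : A) ∈ 𝒜 (g : G ⧸ H))
    -- `γ` is a point of `P` on `B` and `i ∈ γ`:
    (γ : Set A) (hγ : IsPointOn (fixedPart 𝒜 ρ P) γ) (i : A) (hi : i ∈ γ)
    -- the structural map `P → (iAi)ˣ`, `u ↦ ui`, is injective:
    (hinj : ∀ u v : ↥P, (ρ (u : G) : A) * i = (ρ (v : G) : A) * i → u = v) :
    -- existence of the element `a₁` for every `g ∈ N_G(P_γ)` (since `g` fixes `γ`)
    (∀ g ∈ stabNGammaSet ρ P γ, ∃ a₁ b₁ : A, IsConjChoice 𝒜 ρ P i g a₁ b₁) ∧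
    -- `Θ(g) = [i·a₁⁻¹·ρ(g)]` is a well-defined element of
    -- `N_{hU(iAi)}(Pi)/C_{(iBi)ˣ}(Pi)`: the representative lies in `N_{hU(iAi)}(Pi)`,
    (∀ g ∈ stabNGammaSet ρ P γ, ∀ a₁ b₁ : A, IsConjChoice 𝒜 ρ P i g a₁ b₁ →
      i * b₁ * (ρ g : A) ∈ normalizerPiSet 𝒜 ρ P i) ∧
    -- and its class mod `C_{(iBi)ˣ}(Pi)` does not depend on the choice of `a₁`;
    (∀ g ∈ stabNGammaSet ρ P γ, ∀ a₁ b₁ a₂ b₂ : A, IsConjChoice 𝒜 ρ P i g a₁ b₁ →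
      IsConjChoice 𝒜 ρ P i g a₂ b₂ →
      ∃ c ∈ centralizerPiSet 𝒜 ρ P i, i * b₁ * (ρ g : A) = c * (i * b₂ * (ρ g : A))) ∧
    -- `Θ` is a group homomorphism (multiplicative modulo `C_{(iBi)ˣ}(Pi)`);
    (∀ g ∈ stabNGammaSet ρ P γ, ∀ g' ∈ stabNGammaSet ρ P γ,
      ∀ a₁ b₁ a₁' b₁' a₁'' b₁'' : A, IsConjChoice 𝒜 ρ P i g a₁ b₁ →
      IsConjChoice 𝒜 ρ P i g' a₁' b₁' → IsConjChoice 𝒜 ρ P i (g * g') a₁'' b₁'' →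
      ∃ c ∈ centralizerPiSet 𝒜 ρ P i,
        (i * b₁ * (ρ g : A)) * (i * b₁' * (ρ g' : A)) =
          c * (i * b₁'' * (ρ (g * g') : A))) ∧
    -- the kernel of `Θ` is `C_H(P)`
    (∀ g ∈ stabNGammaSet ρ P γ, ∀ a₁ b₁ : A, IsConjChoice 𝒜 ρ P i g a₁ b₁ →
      (i * b₁ * (ρ g : A) ∈ centralizerPiSet 𝒜 ρ P i ↔
        g ∈ Subgroup.centralizer (P : Set G) ⊓ H)) := by
  
  obtain ⟨i₀, hprim, hγeq⟩ := hγ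
  have hi0 := hi
  rw [hγeq] at hi0
  obtain ⟨u₀, v₀, hu₀, hv₀, huv₀, hvu₀, hieq⟩ := hi0
  have hmulS : ∀ {a b : A}, a ∈ fixedPart 𝒜 ρ P → b ∈ fixedPart 𝒜 ρ P →
      a * b ∈ fixedPart 𝒜 ρ P := fun ha hb => theta_fixedPart_mul hgmul ha hb
  have hiS : i ∈ fixedPart 𝒜 ρ P := by
    rw [hieq]; exact hmulS (hmulS hu₀ hprim.1) hv₀
  have hiB : i ∈ 𝒜 1 := hiS.1
  have hii : i * i = i := by
    rw [hieq]; simp only [mul_assoc]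
    rw [theta_mul_one_ctx hvu₀, theta_idem_ctx hprim.2.1]
  have hine : i ≠ 0 := by
    intro h0
    apply hprim.2.2.1
    have h1 : i₀ = v₀ * i * u₀ := by
      rw [hieq]; simp only [mul_assoc]
      rw [theta_mul_one_ctx hvu₀, hvu₀, mul_one]
    rw [h1, h0, mul_zero, zero_mul]
  -- the master collection of facts about `j = i·b₁·ρ(g)` and `jv = ρ(g)⁻¹·a₁·i`
  have master : ∀ g : G, g ∈ Subgroup.normalizer (P : Set G) → ∀ a₁ b₁ : A, IsConjChoice 𝒜 ρ P i g a₁ b₁ →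
      ((i * b₁ * (ρ g : A)) * i = i * b₁ * (ρ g : A) ∧
       i * (i * b₁ * (ρ g : A)) = i * b₁ * (ρ g : A) ∧
       i * ((ρ g⁻¹ : A) * a₁ * i) = (ρ g⁻¹ : A) * a₁ * i ∧
       ((ρ g⁻¹ : A) * a₁ * i) * i = (ρ g⁻¹ : A) * a₁ * i) ∧
      ((i * b₁ * (ρ g : A)) * ((ρ g⁻¹ : A) * a₁ * i) = i ∧
       ((ρ g⁻¹ : A) * a₁ * i) * (i * b₁ * (ρ g : A)) = i) ∧
      ((i * b₁ * (ρ g : A)) ∈ 𝒜 ((g : G ⧸ H)) ∧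
       ((ρ g⁻¹ : A) * a₁ * i) ∈ 𝒜 ((g : G ⧸ H))⁻¹) ∧
      (∀ a' : A, i * a' * i = a' → (i * b₁ * (ρ g : A)) * a' = i →
        a' * (i * b₁ * (ρ g : A)) = i → a' = (ρ g⁻¹ : A) * a₁ * i) ∧
      (∀ u ∈ P, (i * b₁ * (ρ g : A)) * ((ρ u : A) * i) =
        ((ρ (g * u * g⁻¹) : A) * i) * (i * b₁ * (ρ g : A))) ∧
      (∀ u ∈ P, ((ρ g⁻¹ : A) * a₁ * i) * ((ρ u : A) * i) =
        ((ρ (g⁻¹ * u * g) : A) * i) * ((ρ g⁻¹ : A) * a₁ * i)) := by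
    intro g hgN a₁ b₁ hc
    obtain ⟨ha₁, hb₁, hab, hba, hconj⟩ := hc
    have h1 : (ρ g : A) * i = a₁ * i * b₁ * (ρ g : A) := by
      calc (ρ g : A) * i = (ρ g : A) * i * (ρ g⁻¹ : A) * (ρ g : A) := by
            rw [mul_assoc ((ρ g : A) * i), theta_unit_inv_mul, mul_one]
        _ = a₁ * i * b₁ * (ρ g : A) := by rw [hconj]
    have h1' : (ρ g : A) * i = a₁ * (i * (b₁ * (ρ g : A))) := by
      rw [h1]; simp only [mul_assoc]
    have h2 : i * (ρ g⁻¹ : A) = (ρ g⁻¹ : A) * (a₁ * i * b₁) := by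
      calc i * (ρ g⁻¹ : A) = (ρ g⁻¹ : A) * ((ρ g : A) * i * (ρ g⁻¹ : A)) := by
            rw [← mul_assoc, ← mul_assoc, theta_unit_inv_mul, one_mul]
        _ = _ := by rw [hconj]
    have key2 : ∀ x : A, i * ((ρ g⁻¹ : A) * x) = (ρ g⁻¹ : A) * (a₁ * (i * (b₁ * x))) := by
      intro x
      conv_lhs => rw [← mul_assoc, h2]
      simp only [mul_assoc]
    have hji : (i * b₁ * (ρ g : A)) * i = i * b₁ * (ρ g : A) := by
      simp only [mul_assoc]
      rw [h1', theta_mul_one_ctx hba, theta_idem_ctx hii]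
    have hij : i * (i * b₁ * (ρ g : A)) = i * b₁ * (ρ g : A) := by
      simp only [mul_assoc]
      exact theta_idem_ctx hii _
    have hijv : i * ((ρ g⁻¹ : A) * a₁ * i) = (ρ g⁻¹ : A) * a₁ * i := by
      simp only [mul_assoc]
      rw [key2, theta_mul_one_ctx hba, hii]
    have hjvi : ((ρ g⁻¹ : A) * a₁ * i) * i = (ρ g⁻¹ : A) * a₁ * i := by
      simp only [mul_assoc]
      rw [hii]
    have hjj' : (i * b₁ * (ρ g : A)) * ((ρ g⁻¹ : A) * a₁ * i) = i := by
      simp only [mul_assoc]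
      rw [theta_mul_one_ctx (theta_unit_mul_inv ρ g), theta_mul_one_ctx hba, hii]
    have hj'j : ((ρ g⁻¹ : A) * a₁ * i) * (i * b₁ * (ρ g : A)) = i := by
      simp only [mul_assoc]
      rw [theta_idem_ctx hii, ← h1', theta_mul_one_ctx (theta_unit_inv_mul ρ g)]
    have hjA : (i * b₁ * (ρ g : A)) ∈ 𝒜 ((g : G ⧸ H)) := by
      have h := hgmul (hgmul hiB hb₁.1) (hρ g)
      simpa using h
    have hjvA : ((ρ g⁻¹ : A) * a₁ * i) ∈ 𝒜 ((g : G ⧸ H))⁻¹ := by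
      have h := hgmul (hgmul (hρ g⁻¹) ha₁.1) hiB
      have hidx : (((g⁻¹ : G) : G ⧸ H)) * 1 * 1 = ((g : G ⧸ H))⁻¹ := by simp
      exact hidx ▸ h
    refine ⟨⟨hji, hij, hijv, hjvi⟩, ⟨hjj', hj'j⟩, ⟨hjA, hjvA⟩, ?_, ?_, ?_⟩
    · -- uniqueness of the inverse in the corner
      intro a' ha'1 ha'2 ha'3
      have e1 : a' * i = a' := by
        conv_lhs => rw [← ha'1]
        rw [mul_assoc (i * a'), hii, ha'1]
      calc a' = a' * i := e1.symm
        _ = a' * ((i * b₁ * (ρ g : A)) * ((ρ g⁻¹ : A) * a₁ * i)) := by rw [hjj']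
        _ = (a' * (i * b₁ * (ρ g : A))) * ((ρ g⁻¹ : A) * a₁ * i) := (mul_assoc _ _ _).symm
        _ = i * ((ρ g⁻¹ : A) * a₁ * i) := by rw [ha'3]
        _ = (ρ g⁻¹ : A) * a₁ * i := hijv
    · -- conjugation property of j
      intro u hu
      have hvP : g * u * g⁻¹ ∈ P := (Subgroup.mem_normalizer_iff.mp hgN u).mp hu
      simp only [mul_assoc]
      conv_rhs => rw [theta_idem_ctx hii]
      conv_lhs =>
        rw [theta_unit_swap ρ g u, h1', theta_comm_ctx (ha₁.2 _ hvP),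
          theta_mul_one_ctx hba, ← theta_comm_ctx (hiS.2 _ hvP), theta_idem_ctx hii]
      rw [mul_assoc g u g⁻¹]
    · -- conjugation property of jv
      intro u hu
      have hwP : g⁻¹ * u * g ∈ P := by
        have h := (Subgroup.mem_normalizer_iff.mp (inv_mem hgN) u).mp hu
        simpa using h
      simp only [mul_assoc]
      conv_lhs =>
        rw [← theta_comm_ctx (hiS.2 u hu), hii, ← theta_comm_ctx (ha₁.2 u hu),
          theta_unit_swap ρ g⁻¹ u, inv_inv]
      conv_rhs => rw [key2, theta_mul_one_ctx hba, hii]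
      rw [mul_assoc g⁻¹ u g]
  refine ⟨?_, ?_, ?_, ?_, ?_⟩
  · -- Part 1: existence of a conjugating choice
    intro g hg
    have hmem : (ρ g : A) * i * (ρ g⁻¹ : A) ∈ γ := (hg.2 i).mp hi
    rw [hγeq] at hmem
    obtain ⟨u, v, huS, hvS, huv, hvu, heq⟩ := hmem
    refine ⟨u * v₀, u₀ * v, hmulS huS hv₀, hmulS hu₀ hvS, ?_, ?_, ?_⟩
    · simp only [mul_assoc]
      rw [theta_mul_one_ctx hvu₀]; exact huv
    · simp only [mul_assoc]
      rw [theta_mul_one_ctx hvu]; exact huv₀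
    · rw [heq, hieq]
      simp only [mul_assoc]
      rw [theta_mul_one_ctx hvu₀, theta_mul_one_ctx hvu₀]
  · -- Part 2: the representative lies in the normalizer of Pi
    intro g hg a₁ b₁ hc
    obtain ⟨⟨hji, hij, hijv, hjvi⟩, ⟨hjj', hj'j⟩, ⟨hjA, hjvA⟩, huniq, hJc, hJvc⟩ :=
      master g hg.1 a₁ b₁ hc
    refine ⟨⟨?_, ⟨(g : G ⧸ H), hjA⟩, ⟨(ρ g⁻¹ : A) * a₁ * i, ?_, hjj', hj'j⟩⟩, ?_⟩
    · rw [hij, hji]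
    · rw [hijv, hjvi]
    · intro a' ha'1 ha'2 ha'3 u hu
      have ha'eq := huniq a' ha'1 ha'2 ha'3
      subst ha'eq
      have hvP : g * u * g⁻¹ ∈ P := (Subgroup.mem_normalizer_iff.mp hg.1 u).mp hu
      refine ⟨g * u * g⁻¹, hvP, ?_⟩
      rw [hJc u hu, mul_assoc ((ρ (g * u * g⁻¹) : A) * i), hjj',
        mul_assoc (ρ (g * u * g⁻¹) : A) i i, hii]
  · -- Part 3: independence of the choice
    intro g hg a₁ b₁ a₂ b₂ hc₁ hc₂
    obtain ⟨⟨hji₁, hij₁, hijv₁, hjvi₁⟩, ⟨hjj₁, hj'j₁⟩, ⟨hjA₁, hjvA₁⟩, huniq₁, hJc₁, hJvc₁⟩ :=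
      master g hg.1 a₁ b₁ hc₁
    obtain ⟨⟨hji₂, hij₂, hijv₂, hjvi₂⟩, ⟨hjj₂, hj'j₂⟩, ⟨hjA₂, hjvA₂⟩, huniq₂, hJc₂, hJvc₂⟩ :=
      master g hg.1 a₂ b₂ hc₂
    set j₁ := i * b₁ * (ρ g : A) with hdefj₁
    set j₂ := i * b₂ * (ρ g : A) with hdefj₂
    set w₁ := (ρ g⁻¹ : A) * a₁ * i with hdefw₁
    set w₂ := (ρ g⁻¹ : A) * a₂ * i with hdefw₂
    refine ⟨j₁ * w₂, ⟨?_, ?_, ⟨j₂ * w₁, ?_, ?_, ?_, ?_⟩, ?_⟩, ?_⟩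
    · rw [← mul_assoc i, hij₁, mul_assoc, hjvi₂]
    · have h := hgmul hjA₁ hjvA₂
      have hidx : ((g : G ⧸ H)) * ((g : G ⧸ H))⁻¹ = 1 := by simp
      exact hidx ▸ h
    · rw [← mul_assoc i, hij₂, mul_assoc, hjvi₁]
    · have h := hgmul hjA₂ hjvA₁
      have hidx : ((g : G ⧸ H)) * ((g : G ⧸ H))⁻¹ = 1 := by simp
      exact hidx ▸ h
    · rw [mul_assoc j₁, ← mul_assoc w₂, hj'j₂, hijv₁, hjj₁]
    · rw [mul_assoc j₂, ← mul_assoc w₁, hj'j₁, hijv₂, hjj₂]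
    · intro u hu
      have hwP : g⁻¹ * u * g ∈ P := by
        have h := (Subgroup.mem_normalizer_iff.mp (inv_mem hg.1) u).mp hu
        simpa using h
      have hguw : g * (g⁻¹ * u * g) * g⁻¹ = u := by group
      rw [mul_assoc j₁, hJvc₂ u hu, ← mul_assoc j₁, hJc₁ _ hwP, hguw, mul_assoc]
    · rw [mul_assoc j₁ w₂, hj'j₂, hji₁]
  · -- Part 4: Θ is multiplicative
    intro g hg g' hg' a₁ b₁ a₁' b₁' a₁'' b₁'' hc hc' hc''
    have hgg'N : g * g' ∈ Subgroup.normalizer (P : Set G) := mul_mem hg.1 hg'.1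
    obtain ⟨⟨hji₁, hij₁, hijv₁, hjvi₁⟩, ⟨hjj₁, hj'j₁⟩, ⟨hjA₁, hjvA₁⟩, huniq₁, hJc₁, hJvc₁⟩ :=
      master g hg.1 a₁ b₁ hc
    obtain ⟨⟨hji₂, hij₂, hijv₂, hjvi₂⟩, ⟨hjj₂, hj'j₂⟩, ⟨hjA₂, hjvA₂⟩, huniq₂, hJc₂, hJvc₂⟩ :=
      master g' hg'.1 a₁' b₁' hc'
    obtain ⟨⟨hji₃, hij₃, hijv₃, hjvi₃⟩, ⟨hjj₃, hj'j₃⟩, ⟨hjA₃, hjvA₃⟩, huniq₃, hJc₃, hJvc₃⟩ :=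
      master (g * g') hgg'N a₁'' b₁'' hc''
    set j := i * b₁ * (ρ g : A) with hdefj
    set j' := i * b₁' * (ρ g' : A) with hdefj'
    set j'' := i * b₁'' * (ρ (g * g') : A) with hdefj''
    set w := (ρ g⁻¹ : A) * a₁ * i with hdefw
    set w' := (ρ g'⁻¹ : A) * a₁' * i with hdefw'
    set w'' := (ρ (g * g')⁻¹ : A) * a₁'' * i with hdefw''
    refine ⟨j * j' * w'', ⟨?_, ?_, ⟨j'' * w' * w, ?_, ?_, ?_, ?_⟩, ?_⟩, ?_⟩
    · rw [← mul_assoc i, ← mul_assoc i, hij₁, mul_assoc, hjvi₃]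
    · have h := hgmul (hgmul hjA₁ hjA₂) hjvA₃
      have hidx : ((g : G ⧸ H)) * ((g' : G ⧸ H)) * (((((g * g') : G)) : G ⧸ H))⁻¹ = 1 := by
        rw [QuotientGroup.mk_mul, mul_inv_cancel]
      exact hidx ▸ h
    · rw [← mul_assoc i, ← mul_assoc i, hij₃, mul_assoc, hjvi₁]
    · have h := hgmul (hgmul hjA₃ hjvA₂) hjvA₁
      have hidx : (((((g * g') : G)) : G ⧸ H)) * ((g' : G ⧸ H))⁻¹ * ((g : G ⧸ H))⁻¹ = 1 := by
        simp
      exact hidx ▸ h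
    · -- (j*j'*w'') * (j''*w'*w) = i
      rw [mul_assoc (j * j') w'', ← mul_assoc w'', ← mul_assoc w'', hj'j₃, hijv₂,
        ← mul_assoc (j * j'), mul_assoc j j' w', hjj₂, hji₁, hjj₁]
    · -- (j''*w'*w) * (j*j'*w'') = i
      rw [mul_assoc (j'' * w') w, ← mul_assoc w, ← mul_assoc w, hj'j₁, hij₂,
        ← mul_assoc (j'' * w'), mul_assoc j'' w' j', hj'j₂, hji₃, hjj₃]
    · -- commutation with Pi
      intro u hu
      have hwP : (g * g')⁻¹ * u * (g * g') ∈ P := by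
        have h := (Subgroup.mem_normalizer_iff.mp (inv_mem hgg'N) u).mp hu
        simpa using h
      have hw'P : g' * ((g * g')⁻¹ * u * (g * g')) * g'⁻¹ ∈ P :=
        (Subgroup.mem_normalizer_iff.mp hg'.1 _).mp hwP
      have hgu : g * (g' * ((g * g')⁻¹ * u * (g * g')) * g'⁻¹) * g⁻¹ = u := by group
      rw [mul_assoc (j * j') w'', hJvc₃ u hu, ← mul_assoc (j * j'), mul_assoc j j',
        hJc₂ _ hwP, ← mul_assoc j, hJc₁ _ hw'P, hgu, mul_assoc ((ρ u : A) * i) j j',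
        mul_assoc ((ρ u : A) * i)]
    · rw [mul_assoc (j * j') w'', hj'j₃, mul_assoc j j' i, hji₂]
  · -- Part 5: the kernel is C_H(P)
    intro g hg a₁ b₁ hc
    obtain ⟨⟨hji, hij, hijv, hjvi⟩, ⟨hjj', hj'j⟩, ⟨hjA, hjvA⟩, huniq, hJc, hJvc⟩ :=
      master g hg.1 a₁ b₁ hc
    constructor
    · intro hcent
      have hjne : i * b₁ * (ρ g : A) ≠ 0 := by
        intro h0; apply hine; rw [← hjj', h0, zero_mul]
      have hg1 : (g : G ⧸ H) = 1 := by
        by_contra hne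
        exact hjne (Submodule.disjoint_def.mp (hind 1) _ hcent.2.1
          ((le_iSup₂ (f := fun (x : G ⧸ H) (_ : x ≠ 1) => 𝒜 x) (g : G ⧸ H) hne) hjA))
      refine Subgroup.mem_inf.mpr ⟨Subgroup.mem_centralizer_iff.mpr ?_,
        (QuotientGroup.eq_one_iff g).mp hg1⟩
      intro u hu
      have h2 : ((ρ (g * u * g⁻¹) : A) * i) * (i * b₁ * (ρ g : A)) =
          ((ρ u : A) * i) * (i * b₁ * (ρ g : A)) :=
        (hJc u hu).symm.trans (hcent.2.2.2 u hu)
      have h3 : (ρ (g * u * g⁻¹) : A) * i = (ρ u : A) * i := by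
        have h4 := congrArg (fun x => x * ((ρ g⁻¹ : A) * a₁ * i)) h2
        rwa [mul_assoc ((ρ (g * u * g⁻¹) : A) * i), hjj', mul_assoc (ρ (g * u * g⁻¹) : A) i i,
          hii, mul_assoc ((ρ u : A) * i), hjj', mul_assoc (ρ u : A) i i, hii] at h4
      have hvP : g * u * g⁻¹ ∈ P := (Subgroup.mem_normalizer_iff.mp hg.1 u).mp hu
      have h5 : (⟨g * u * g⁻¹, hvP⟩ : ↥P) = ⟨u, hu⟩ := hinj _ _ h3
      have h6 : g * u * g⁻¹ = u := congrArg Subtype.val h5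
      calc u * g = (g * u * g⁻¹) * g := by rw [h6]
        _ = g * u := by group
    · intro hgC
      obtain ⟨hgCent, hgH⟩ := Subgroup.mem_inf.mp hgC
      have hg1 : (g : G ⧸ H) = 1 := (QuotientGroup.eq_one_iff g).mpr hgH
      refine ⟨?_, hg1 ▸ hjA, ⟨(ρ g⁻¹ : A) * a₁ * i, ?_, ?_, hjj', hj'j⟩, ?_⟩
      · rw [hij, hji]
      · rw [hijv, hjvi]
      · have hidx : ((g : G ⧸ H))⁻¹ = 1 := by rw [hg1, inv_one]
        exact hidx ▸ hjvA
      · intro u hu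
        have h6 := Subgroup.mem_centralizer_iff.mp hgCent u hu
        have h5 : g * u * g⁻¹ = u := by
          rw [← h6, mul_assoc, mul_inv_cancel, mul_one]
        rw [hJc u hu, h5]
end

section
/- Let A be a crossed product of B := A₁ with Ḡ, V a B-module, M := A⊗_B V, and A' := End_A(M)^op graded by A'_g := Hom_{A-Gr}(M, M(g)). Then for all g, x ∈ Ḡ there are natural isomorphisms A'_g ≅ Hom_{A₁}(M₁, M_g) ≅ Hom_{A₁}(M_x, M_{xg}), and A' is a crossed product of A'₁ with Ḡ if and only if V is a Ḡ-invariant B-module. -/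
/-!
STATEMENT 18: Let `A` be a crossed product of `B := A₁` with `Ḡ`, `V` a `B`-module,
`M := A ⊗_B V`, and `A' := End_A(M)^op` graded by `A'_g := Hom_{A-Gr}(M, M(g))`.  Then
for all `g, x ∈ Ḡ` there are natural isomorphisms
`A'_g ≅ Hom_{A₁}(M₁, M_g) ≅ Hom_{A₁}(M_x, M_{xg})` (realized by restriction of
endomorphisms), and `A'` is a crossed product of `A'₁` with `Ḡ` if and only if `V` is a
`Ḡ`-invariant `B`-module.

Encoding: since `A` is a crossed product, the induced module `M = A ⊗_B V` is
(canonically isomorphic to) a `Ḡ`-graded `A`-module `M` with `M₁ ≅ V` and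
`M_g = A_g • M₁` for all `g`; we quantify over such `M` and take `V = M₁`.
`A'_g = Hom_{A-Gr}(M, M(g))` is realized as the set of `A`-linear endomorphisms `f` of
`M` with `f(M_x) ⊆ M_{xg}` for all `x`, and `Ḡ`-invariance of `V` is expressed by
the existence of `B`-linear bijections `M₁ → M_g` (cf. `A_g ⊗_B V ≅ {}^gV`).
-/

section

variable {𝒪 : Type*} [CommRing 𝒪] {Γ : Type*} [Group Γ]
  {A : Type*} [Ring A] [Algebra 𝒪 A]
  {M : Type*} [AddCommGroup M] [Module 𝒪 M] [Module A M] [IsScalarTower 𝒪 A M]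

/-- `A'_g = Hom_{A-Gr}(M, M(g))`: the `A`-linear endomorphisms of `M` shifting the
grading by `g` on the right. -/
def endComp (ℳ : Γ → Submodule 𝒪 M) (g : Γ) : Set (Module.End 𝒪 M) :=
  {f | (∀ (a : A) (m : M), f (a • m) = a • f m) ∧
    ∀ x : Γ, ∀ m ∈ ℳ x, f m ∈ ℳ (x * g)}

/-- Two `𝒪`-linear endomorphisms agreeing on all components are equal. -/
private theorem CP.ext_of_components {ℳ : Γ → Submodule 𝒪 M}
    (hMsup : (⨆ x, ℳ x) = ⊤) (f f' : Module.End 𝒪 M)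
    (h : ∀ y : Γ, ∀ m ∈ ℳ y, f m = f' m) : f = f' := by
  ext m
  have hm : m ∈ ⨆ x, ℳ x := hMsup ▸ Submodule.mem_top
  refine Submodule.iSup_induction ℳ (motive := fun n => f n = f' n) hm (fun i n hn => h i n hn) (by simp) ?_
  intro a b ha hb
  simp [map_add, ha, hb]

/-- In a graded ring, the inverse of a homogeneous unit of degree `g` is homogeneous
of degree `g⁻¹`. -/
private theorem CP.units_inv_mem {𝒜 : Γ → Submodule 𝒪 A}
    (hone : (1 : A) ∈ 𝒜 1)
    (hgmul : ∀ {x y : Γ} {a b : A}, a ∈ 𝒜 x → b ∈ 𝒜 y → a * b ∈ 𝒜 (x * y))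
    (hsup : (⨆ x, 𝒜 x) = ⊤) (hind : iSupIndep 𝒜)
    {g : Γ} (u : Aˣ) (hu : (u : A) ∈ 𝒜 g) : ((u⁻¹ : Aˣ) : A) ∈ 𝒜 g⁻¹ := by
  classical
  haveI : DirectSum.Decomposition 𝒜 :=
    (DirectSum.isInternal_submodule_of_iSupIndep_of_iSup_eq_top hind hsup).chooseDecomposition
  have key : ∀ b : A, (u : A) * (DirectSum.decompose 𝒜 b g⁻¹ : A)
      = (DirectSum.decompose 𝒜 ((u : A) * b) 1 : A) := by
    intro b
    have hb : b ∈ ⨆ x, 𝒜 x := hsup ▸ Submodule.mem_top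
    refine Submodule.iSup_induction 𝒜 (motive := fun b => (u : A) * (DirectSum.decompose 𝒜 b g⁻¹ : A)
        = (DirectSum.decompose 𝒜 ((u : A) * b) 1 : A)) hb ?_ (by simp) ?_
    · intro z a ha
      by_cases hz : z = g⁻¹
      · subst hz
        rw [DirectSum.decompose_of_mem_same 𝒜 ha]
        have : (u : A) * a ∈ 𝒜 1 := by
          have := hgmul hu ha
          rwa [mul_inv_cancel] at this
        rw [DirectSum.decompose_of_mem_same 𝒜 this]
      · rw [DirectSum.decompose_of_mem_ne 𝒜 ha hz]
        have hmem : (u : A) * a ∈ 𝒜 (g * z) := hgmul hu ha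
        have hne : g * z ≠ 1 := by
          intro hcon
          exact hz (by rw [← one_mul z, ← inv_mul_cancel g, mul_assoc, hcon, mul_one])
        rw [DirectSum.decompose_of_mem_ne 𝒜 hmem hne, mul_zero]
    · intro a b ha hb
      simp only [mul_add, DirectSum.decompose_add, DirectSum.add_apply, Submodule.coe_add,
        ha, hb]
  have hkey := key ((u⁻¹ : Aˣ) : A)
  rw [Units.mul_inv] at hkey
  rw [DirectSum.decompose_of_mem_same 𝒜 hone] at hkey
  have : ((u⁻¹ : Aˣ) : A) = (DirectSum.decompose 𝒜 ((u⁻¹ : Aˣ) : A) g⁻¹ : A) := by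
    calc ((u⁻¹ : Aˣ) : A)
        = ((u⁻¹ : Aˣ) : A) * ((u : A) * (DirectSum.decompose 𝒜 ((u⁻¹ : Aˣ) : A) g⁻¹ : A)) := by
          rw [hkey, mul_one]
      _ = (DirectSum.decompose 𝒜 ((u⁻¹ : Aˣ) : A) g⁻¹ : A) := by
          rw [← mul_assoc, Units.inv_mul, one_mul]
  rw [this]
  exact SetLike.coe_mem _

theorem endComp_iso_hom_and_crossed_product_iff_invariant
    (𝒜 : Γ → Submodule 𝒪 A) (ℳ : Γ → Submodule 𝒪 M)
    -- `A` is a `Γ`-graded algebra: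
    (hone : (1 : A) ∈ 𝒜 1)
    (hgmul : ∀ {x y : Γ} {a b : A}, a ∈ 𝒜 x → b ∈ 𝒜 y → a * b ∈ 𝒜 (x * y))
    (hsup : (⨆ x, 𝒜 x) = ⊤) (hind : iSupIndep 𝒜)
    -- which is a crossed product: every component contains a unit:
    (hcross : ∀ g : Γ, ∃ u : Aˣ, (u : A) ∈ 𝒜 g)
    -- `M` is a `Γ`-graded `A`-module:
    (hMsup : (⨆ x, ℳ x) = ⊤) (hMind : iSupIndep ℳ)
    (hMcompat : ∀ (g x : Γ) (a : A) (m : M), a ∈ 𝒜 g → m ∈ ℳ x → a • m ∈ ℳ (g * x))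
    -- which is induced from its identity component `V = M₁`, i.e. `M = A ⊗_B V`:
    (hInd : ∀ g : Γ, ℳ g = Submodule.span 𝒪
      {m' : M | ∃ a ∈ 𝒜 g, ∃ m ∈ ℳ 1, m' = a • m}) :
    -- (1) for all `g, x`, restriction to `M_x` is a bijection
    --     `A'_g = Hom_{A-Gr}(M, M(g)) ≅ Hom_{A₁}(M_x, M_{xg})`
    --     (the case `x = 1` being `A'_g ≅ Hom_{A₁}(M₁, M_g)`):
    (∀ g x : Γ,
      (∀ f ∈ endComp (A := A) ℳ g, ∀ f' ∈ endComp (A := A) ℳ g,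
        (∀ m ∈ ℳ x, f m = f' m) → f = f') ∧
      (∀ h : ↥(ℳ x) →ₗ[𝒪] M,
        (∀ m : ↥(ℳ x), h m ∈ ℳ (x * g)) →
        (∀ b ∈ 𝒜 1, ∀ m m' : ↥(ℳ x), (m' : M) = b • (m : M) → h m' = b • h m) →
        ∃ f ∈ endComp (A := A) ℳ g, ∀ m : ↥(ℳ x), f (m : M) = h m)) ∧
    -- (2) `A'` is a crossed product of `A'₁` with `Γ` (every component `A'_g` contains
    --     an invertible element) iff `V = M₁` is a `Γ`-invariant `B`-module
    --     (there are `B`-linear bijections `M₁ ≅ M_g`, i.e. `V ≅ {}^gV` for all `g`):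
    ((∀ g : Γ, ∃ f ∈ endComp (A := A) ℳ g, Function.Bijective f) ↔
      (∀ g : Γ, ∃ τ : ↥(ℳ 1) →ₗ[𝒪] M,
        (∀ m : ↥(ℳ 1), τ m ∈ ℳ g) ∧
        (∀ b ∈ 𝒜 1, ∀ m m' : ↥(ℳ 1), (m' : M) = b • (m : M) → τ m' = b • τ m) ∧
        (∀ m m' : ↥(ℳ 1), τ m = τ m' → m = m') ∧
        (∀ y ∈ ℳ g, ∃ m : ↥(ℳ 1), τ m = y))) := by
  classical
  haveI : DirectSum.Decomposition ℳ :=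
    (DirectSum.isInternal_submodule_of_iSupIndep_of_iSup_eq_top hMind hMsup).chooseDecomposition
  -- choose homogeneous units
  choose u humem using hcross
  have huinv : ∀ g : Γ, (((u g)⁻¹ : Aˣ) : A) ∈ 𝒜 g⁻¹ :=
    fun g => CP.units_inv_mem hone hgmul hsup hind (u g) (humem g)
  -- scalar multiplication by an element of `A` as an `𝒪`-linear endomorphism
  let sm : A → Module.End 𝒪 M := fun a => DistribMulAction.toLinearMap 𝒪 M a
  have sm_apply : ∀ (a : A) (m : M), sm a m = a • m := fun _ _ => rfl
  -- Uniqueness: graded endomorphisms are determined by their restriction to `ℳ x`.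
  have uniq : ∀ g x : Γ,
      ∀ f ∈ endComp (A := A) ℳ g, ∀ f' ∈ endComp (A := A) ℳ g,
        (∀ m ∈ ℳ x, f m = f' m) → f = f' := by
    intro g x f hf f' hf' hagree
    refine CP.ext_of_components hMsup f f' ?_
    intro y m hm
    set c : A := ((u x : A) * (((u y)⁻¹ : Aˣ) : A)) with hc
    have hcmem : c ∈ 𝒜 (x * y⁻¹) := hgmul (humem x) (huinv y)
    have hm' : c • m ∈ ℳ x := by
      have := hMcompat (x * y⁻¹) y c m hcmem hm
      rwa [inv_mul_cancel_right] at this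
    have hrec : ((u y : A) * (((u x)⁻¹ : Aˣ) : A)) • c • m = m := by
      rw [smul_smul, hc]
      have : (u y : A) * (((u x)⁻¹ : Aˣ) : A) * ((u x : A) * (((u y)⁻¹ : Aˣ) : A)) = 1 := by
        rw [mul_assoc, Units.inv_mul_cancel_left, Units.mul_inv]
      rw [this, one_smul]
    calc f m = f (((u y : A) * (((u x)⁻¹ : Aˣ) : A)) • c • m) := by rw [hrec]
      _ = ((u y : A) * (((u x)⁻¹ : Aˣ) : A)) • f (c • m) := hf.1 _ _
      _ = ((u y : A) * (((u x)⁻¹ : Aˣ) : A)) • f' (c • m) := by rw [hagree _ hm']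
      _ = f' (((u y : A) * (((u x)⁻¹ : Aˣ) : A)) • c • m) := (hf'.1 _ _).symm
      _ = f' m := by rw [hrec]
  -- Extension: every suitable `B`-linear map on `ℳ x` extends to a graded endomorphism.
  have extend : ∀ g x : Γ, ∀ h : ↥(ℳ x) →ₗ[𝒪] M,
      (∀ m : ↥(ℳ x), h m ∈ ℳ (x * g)) →
      (∀ b ∈ 𝒜 1, ∀ m m' : ↥(ℳ x), (m' : M) = b • (m : M) → h m' = b • h m) →
      ∃ f ∈ endComp (A := A) ℳ g, ∀ m : ↥(ℳ x), f (m : M) = h m := by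
    intro g x h hmap hB
    -- transfer `h` to the identity component
    have memx : ∀ n ∈ ℳ 1, (u x : A) • n ∈ ℳ x := by
      intro n hn
      have := hMcompat x 1 _ n (humem x) hn
      rwa [mul_one] at this
    set h₁ : ↥(ℳ 1) →ₗ[𝒪] M :=
      sm (((u x)⁻¹ : Aˣ) : A) ∘ₗ h ∘ₗ (sm (u x : A)).restrict memx with hh₁
    have h₁_apply : ∀ m : ↥(ℳ 1),
        h₁ m = (((u x)⁻¹ : Aˣ) : A) • h ⟨(u x : A) • (m : M), memx _ m.2⟩ := fun m => rfl
    have h₁mem : ∀ m : ↥(ℳ 1), h₁ m ∈ ℳ g := by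
      intro m
      rw [h₁_apply]
      have := hMcompat x⁻¹ (x * g) _ _ (huinv x) (hmap ⟨(u x : A) • (m : M), memx _ m.2⟩)
      rwa [inv_mul_cancel_left] at this
    have h₁B : ∀ b ∈ 𝒜 1, ∀ m m' : ↥(ℳ 1), (m' : M) = b • (m : M) → h₁ m' = b • h₁ m := by
      intro b hb m m' hmm'
      set b' : A := (u x : A) * b * (((u x)⁻¹ : Aˣ) : A) with hb'def
      have hb' : b' ∈ 𝒜 1 := by
        have := hgmul (hgmul (humem x) hb) (huinv x)
        rwa [mul_one, mul_inv_cancel] at this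
      have hcoe : ((⟨(u x : A) • (m' : M), memx _ m'.2⟩ : ↥(ℳ x)) : M)
          = b' • ((⟨(u x : A) • (m : M), memx _ m.2⟩ : ↥(ℳ x)) : M) := by
        simp only [hmm', smul_smul, hb'def, Units.inv_mul_cancel_right]
      have := hB b' hb' ⟨(u x : A) • (m : M), memx _ m.2⟩
        ⟨(u x : A) • (m' : M), memx _ m'.2⟩ hcoe
      rw [h₁_apply, h₁_apply, this, smul_smul, smul_smul, hb'def]
      congr 1
      rw [← mul_assoc, Units.inv_mul_cancel_left]
    -- the componentwise pieces of the extension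
    have memy : ∀ y : Γ, ∀ n ∈ ℳ y, (((u y)⁻¹ : Aˣ) : A) • n ∈ ℳ 1 := by
      intro y n hn
      have := hMcompat y⁻¹ y _ n (huinv y) hn
      rwa [inv_mul_cancel] at this
    set F : ∀ y : Γ, ↥(ℳ y) →ₗ[𝒪] M :=
      fun y => sm (u y : A) ∘ₗ h₁ ∘ₗ (sm (((u y)⁻¹ : Aˣ) : A)).restrict (memy y) with hF
    have F_apply : ∀ (y : Γ) (m : ↥(ℳ y)),
        F y m = (u y : A) • h₁ ⟨(((u y)⁻¹ : Aˣ) : A) • (m : M), memy y _ m.2⟩ :=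
      fun y m => rfl
    set f : Module.End 𝒪 M :=
      (DirectSum.toModule 𝒪 Γ M F) ∘ₗ (DirectSum.decomposeLinearEquiv ℳ).toLinearMap with hfdef
    have fc : ∀ (y : Γ) (m : M) (hm : m ∈ ℳ y), f m = F y ⟨m, hm⟩ := by
      intro y m hm
      have : f m = DirectSum.toModule 𝒪 Γ M F (DirectSum.decompose ℳ m) := rfl
      rw [this, DirectSum.decompose_of_mem ℳ hm, ← DirectSum.lof_eq_of 𝒪,
        DirectSum.toModule_lof]
    have fmem : ∀ (y : Γ), ∀ m ∈ ℳ y, f m ∈ ℳ (y * g) := by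
      intro y m hm
      rw [fc y m hm, F_apply]
      exact hMcompat y g _ _ (humem y) (h₁mem _)
    have fA : ∀ (a : A) (m : M), f (a • m) = a • f m := by
      intro a m
      have hbase : ∀ z : Γ, ∀ a ∈ 𝒜 z, ∀ y : Γ, ∀ m ∈ ℳ y, f (a • m) = a • f m := by
        intro z a ha y m hm
        have ham : a • m ∈ ℳ (z * y) := hMcompat z y a m ha hm
        rw [fc (z * y) (a • m) ham, fc y m hm, F_apply, F_apply]
        set b : A := (((u (z * y))⁻¹ : Aˣ) : A) * a * (u y : A) with hbdef
        have hb : b ∈ 𝒜 1 := by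
          have := hgmul (hgmul (huinv (z * y)) ha) (humem y)
          rwa [show (z * y)⁻¹ * z * y = 1 by group] at this
        have hcoe : ((⟨(((u (z * y))⁻¹ : Aˣ) : A) • (a • m), memy (z * y) _ ham⟩ :
            ↥(ℳ 1)) : M)
            = b • ((⟨(((u y)⁻¹ : Aˣ) : A) • m, memy y m hm⟩ : ↥(ℳ 1)) : M) := by
          simp only [smul_smul, hbdef, Units.mul_inv_cancel_right]
        have := h₁B b hb ⟨(((u y)⁻¹ : Aˣ) : A) • m, memy y m hm⟩
          ⟨(((u (z * y))⁻¹ : Aˣ) : A) • (a • m), memy (z * y) _ ham⟩ hcoe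
        rw [this, smul_smul, smul_smul, hbdef]
        congr 1
        rw [← mul_assoc, ← mul_assoc, Units.mul_inv, one_mul]
      -- extend by linearity in `m`, then in `a`
      have hmem : m ∈ ⨆ y, ℳ y := hMsup ▸ Submodule.mem_top
      have hamem : a ∈ ⨆ z, 𝒜 z := hsup ▸ Submodule.mem_top
      refine Submodule.iSup_induction 𝒜 hamem (motive := fun a => f (a • m) = a • f m) ?_
        (by simp) ?_
      · intro z a ha
        refine Submodule.iSup_induction ℳ hmem (motive := fun m => f (a • m) = a • f m) ?_
          (by simp) ?_
        · intro y n hn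
          exact hbase z a ha y n hn
        · intro n n' hn hn'
          rw [smul_add, map_add, hn, hn', map_add, smul_add]
      · intro a a' ha ha'
        rw [add_smul, map_add, ha, ha', add_smul]
    have frest : ∀ m : ↥(ℳ x), f (m : M) = h m := by
      intro m
      rw [fc x (m : M) m.2, F_apply, h₁_apply]
      rw [smul_smul, Units.mul_inv, one_smul]
      congr 1
      apply Subtype.ext
      show (u x : A) • ((((u x)⁻¹ : Aˣ) : A) • (m : M)) = (m : M)
      rw [smul_smul, Units.mul_inv, one_smul]
    exact ⟨f, ⟨fA, fmem⟩, frest⟩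
  refine ⟨fun g x => ⟨uniq g x, extend g x⟩, ?_, ?_⟩
  · -- crossed product ⇒ invariance
    intro hcp g
    obtain ⟨f, hf, hbij⟩ := hcp g
    refine ⟨f.domRestrict (ℳ 1), ?_, ?_, ?_, ?_⟩
    · intro m
      have := hf.2 1 (m : M) m.2
      rwa [one_mul] at this
    · intro b _ m m' hmm'
      simp only [LinearMap.domRestrict_apply, hmm', hf.1]
    · intro m m' hmm'
      exact Subtype.ext (hbij.1 hmm')
    · intro y hy
      obtain ⟨m, rfl⟩ := hbij.2 y
      refine ⟨⟨(DirectSum.decompose ℳ m 1 : M), SetLike.coe_mem _⟩, ?_⟩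
      simp only [LinearMap.domRestrict_apply]
      -- projections commute with graded endomorphisms
      have proj : ∀ m' : M, f (DirectSum.decompose ℳ m' 1 : M)
          = (DirectSum.decompose ℳ (f m') g : M) := by
        intro m'
        have hmem : m' ∈ ⨆ y, ℳ y := hMsup ▸ Submodule.mem_top
        refine Submodule.iSup_induction ℳ hmem
          (motive := fun m' => f (DirectSum.decompose ℳ m' 1 : M)
            = (DirectSum.decompose ℳ (f m') g : M)) ?_ (by simp) ?_
        · intro z n hn
          by_cases hz : z = 1
          · subst hz
            rw [DirectSum.decompose_of_mem_same ℳ hn]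
            have : f n ∈ ℳ g := by
              have := hf.2 1 n hn; rwa [one_mul] at this
            rw [DirectSum.decompose_of_mem_same ℳ this]
          · rw [DirectSum.decompose_of_mem_ne ℳ hn hz, map_zero]
            have hfn : f n ∈ ℳ (z * g) := hf.2 z n hn
            have hne : z * g ≠ g := by
              intro hcon
              exact hz (by rw [← mul_one z, ← mul_inv_cancel g, ← mul_assoc, hcon,
                mul_inv_cancel])
            rw [DirectSum.decompose_of_mem_ne ℳ hfn hne]
        · intro a b ha hb
          simp only [DirectSum.decompose_add, DirectSum.add_apply, Submodule.coe_add,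
            map_add, ha, hb]
      rw [proj m, DirectSum.decompose_of_mem_same ℳ hy]
  · -- invariance ⇒ crossed product
    intro hτ g
    obtain ⟨τ, hτmem, hτB, hτinj, hτsurj⟩ := hτ g
    -- the bijective corestriction of τ
    set τc : ↥(ℳ 1) →ₗ[𝒪] ↥(ℳ g) := τ.codRestrict (ℳ g) hτmem with hτc
    have hτcbij : Function.Bijective τc := by
      constructor
      · intro m m' hmm'
        exact hτinj m m' (congrArg Subtype.val hmm')
      · intro y
        obtain ⟨m, hm⟩ := hτsurj (y : M) y.2
        exact ⟨m, Subtype.ext hm⟩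
    set e : ↥(ℳ 1) ≃ₗ[𝒪] ↥(ℳ g) := LinearEquiv.ofBijective τc hτcbij with he
    have he_apply : ∀ m : ↥(ℳ 1), ((e m : ↥(ℳ g)) : M) = τ m := fun m => rfl
    -- extension of τ
    obtain ⟨f, hf, hfτ⟩ := extend g 1 τ (by intro m; rw [one_mul]; exact hτmem m) hτB
    -- the inverse map τ' and its extension
    set τ' : ↥(ℳ g) →ₗ[𝒪] M := (ℳ 1).subtype ∘ₗ (e.symm : ↥(ℳ g) →ₗ[𝒪] ↥(ℳ 1)) with hτ'
    have hτ'_apply : ∀ m : ↥(ℳ g), τ' m = ((e.symm m : ↥(ℳ 1)) : M) := fun m => rfl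
    have hτ'mem : ∀ m : ↥(ℳ g), τ' m ∈ ℳ (g * g⁻¹) := by
      intro m
      rw [mul_inv_cancel, hτ'_apply]
      exact (e.symm m).2
    have hτ'B : ∀ b ∈ 𝒜 1, ∀ m m' : ↥(ℳ g), (m' : M) = b • (m : M) → τ' m' = b • τ' m := by
      intro b hb m m' hmm'
      have hbmem : b • ((e.symm m : ↥(ℳ 1)) : M) ∈ ℳ 1 := by
        have := hMcompat 1 1 b _ hb (e.symm m).2
        rwa [one_mul] at this
      have key : e.symm m' = ⟨b • ((e.symm m : ↥(ℳ 1)) : M), hbmem⟩ := by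
        apply e.injective
        rw [e.apply_symm_apply]
        apply Subtype.ext
        rw [he_apply]
        have := hτB b hb (e.symm m) ⟨b • ((e.symm m : ↥(ℳ 1)) : M), hbmem⟩ rfl
        rw [this, hmm']
        congr 1
        have : τ (e.symm m) = ((e (e.symm m) : ↥(ℳ g)) : M) := (he_apply _).symm
        rw [this, e.apply_symm_apply]
      rw [hτ'_apply, hτ'_apply, key]
    obtain ⟨f', hf', hf'τ⟩ := extend g⁻¹ g τ' hτ'mem hτ'B
    -- `1` is a graded endomorphism of degree `1`
    have hid : (1 : Module.End 𝒪 M) ∈ endComp (A := A) ℳ 1 := by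
      refine ⟨fun a m => rfl, fun z m hm => ?_⟩
      rw [mul_one]
      exact hm
    -- f' ∘ f = 1
    have hcomp1 : f' * f ∈ endComp (A := A) ℳ 1 := by
      refine ⟨fun a m => ?_, fun z m hm => ?_⟩
      · simp only [Module.End.mul_apply, hf.1, hf'.1]
      · have h1 := hf.2 z m hm
        have h2 := hf'.2 (z * g) _ h1
        rw [mul_assoc, mul_inv_cancel] at h2
        simpa using h2
    have hleft : f' * f = 1 := by
      refine uniq 1 1 (f' * f) hcomp1 1 hid ?_
      intro m hm
      have h1 : f m = τ ⟨m, hm⟩ := hfτ ⟨m, hm⟩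
      have h2 : f' (τ ⟨m, hm⟩) = τ' ⟨τ ⟨m, hm⟩, hτmem ⟨m, hm⟩⟩ :=
        hf'τ ⟨τ ⟨m, hm⟩, hτmem ⟨m, hm⟩⟩
      simp only [Module.End.mul_apply, Module.End.one_apply, h1, h2, hτ'_apply]
      have : (⟨τ ⟨m, hm⟩, hτmem ⟨m, hm⟩⟩ : ↥(ℳ g)) = e ⟨m, hm⟩ := Subtype.ext rfl
      rw [this, e.symm_apply_apply]
    -- f ∘ f' = 1
    have hcomp2 : f * f' ∈ endComp (A := A) ℳ 1 := by
      refine ⟨fun a m => ?_, fun z m hm => ?_⟩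
      · simp only [Module.End.mul_apply, hf.1, hf'.1]
      · have h1 := hf'.2 z m hm
        have h2 := hf.2 (z * g⁻¹) _ h1
        rw [mul_assoc, inv_mul_cancel] at h2
        simpa using h2
    have hright : f * f' = 1 := by
      refine uniq 1 g (f * f') hcomp2 1 hid ?_
      intro m hm
      have h1 : f' m = τ' ⟨m, hm⟩ := hf'τ ⟨m, hm⟩
      simp only [Module.End.mul_apply, Module.End.one_apply, h1, hτ'_apply]
      have h2 : f ((e.symm ⟨m, hm⟩ : ↥(ℳ 1)) : M) = τ (e.symm ⟨m, hm⟩) := hfτ _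
      rw [h2]
      have : τ (e.symm ⟨m, hm⟩) = ((e (e.symm ⟨m, hm⟩) : ↥(ℳ g)) : M) := (he_apply _).symm
      rw [this, e.apply_symm_apply]
    refine ⟨f, hf, ?_⟩
    refine Function.bijective_iff_has_inverse.mpr ⟨f', ?_, ?_⟩
    · intro m
      exact DFunLike.congr_fun hleft m
    · intro m
      exact DFunLike.congr_fun hright m

end
end
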